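/- Let M̄ be a subgroup of N(S)/S and suppose the general QET condition holds: for every pair E_i, E_j in the same coset of N(S), the class of E_i† E_j in N(S)/S lies in M̄ (taking i fixed as a reference). Then the strong condition holds: for all pairs E_j, E_k in the error set, E_j† E_k ∈ (G_n \ N(S)) ∪ M, where M is the preimage of M̄ in N(S). -/

import Mathlib

/-- When the admissible error set is a group, the general QET condition implies the
strong condition: if every pair of errors with the same syndrome has product
`E_i⁻¹ E_j` in `M` (the preimage in `N(S)` of a subgroup `M̄ ≤ N(S)/S`), then for
every pair of errors `E_j⁻¹ E_k ∈ (G \ N(S)) ∪ M`. -/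
theorem general_qet_implies_strong_qet_of_group
    {G : Type*} [Group G] (S M : Subgroup G)
    (hSM : S ≤ M) (hMN : M ≤ Subgroup.centralizer (S : Set G))
    (m : ℕ) (f : G → Fin m → ZMod 2)
    (hhom : ∀ E F : G, f (E * F) = f E + f F)
    (hker : ∀ E : G, f E = 0 ↔ E ∈ Subgroup.centralizer (S : Set G))
    (Err : Set G)
    (hgen : ∀ Ei ∈ Err, ∀ Ej ∈ Err, f Ei = f Ej → Ei⁻¹ * Ej ∈ M) :
    ∀ Ej ∈ Err, ∀ Ek ∈ Err,
      Ej⁻¹ * Ek ∈ ((Subgroup.centralizer (S : Set G) : Set G))ᶜ ∪ (M : Set G) := by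
  intro Ej hEj Ek hEk
  by_cases h : f Ej = f Ek
  · exact Or.inr (hgen Ej hEj Ek hEk h)
  · left
    intro hc
    apply h
    have h1 : f 1 = 0 := by
      have := hhom 1 1
      simp only [mul_one] at this
      exact left_eq_add.mp this
    have hinv : f (Ej⁻¹) = -f Ej := by
      have := hhom Ej⁻¹ Ej
      simp only [inv_mul_cancel, h1] at this
      exact eq_neg_of_add_eq_zero_left this.symm
    have h0 : f (Ej⁻¹ * Ek) = 0 := (hker _).mpr hc
    have heq := hhom Ej⁻¹ Ek
    rw [h0, hinv] at heq
    have : f Ek = f Ej := by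
      have := eq_neg_of_add_eq_zero_right heq.symm
      simpa using this
    exact this.symm
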